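/- Let K ∈ GL_n(ℂ) and m a positive integer. Then there exists K̂ ∈ GL_n(ℂ) with K̂^m = K such that every A ∈ GL_n(ℂ) commuting with K also commutes with K̂. -/

import Mathlib

attribute [local instance] Matrix.linftyOpNormedAddCommGroup Matrix.linftyOpNormedRing
  Matrix.linftyOpNormedAlgebra

open Polynomial in
/-- The inverse of an invertible matrix lies in the algebra adjoin of the matrix. -/
lemma inv_mem_adjoin {n : ℕ} (M : Matrix (Fin n) (Fin n) ℂ) (h : IsUnit M) :
    ∃ N ∈ Algebra.adjoin ℂ {M}, M * N = 1 ∧ N * M = 1 := by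
  set p := M.charpoly with hp
  have hc : p.coeff 0 ≠ 0 := by
    have hdet : M.det ≠ 0 := by
      simpa [isUnit_iff_ne_zero] using (Matrix.isUnit_iff_isUnit_det M).1 h
    intro h0
    apply hdet
    rw [Matrix.det_eq_sign_charpoly_coeff, ← hp, h0, mul_zero]
  have hCH : Polynomial.aeval M p = 0 := Matrix.aeval_self_charpoly M
  have hdecomp : X * p.divX + C (p.coeff 0) = p := X_mul_divX_add p
  have h2 : M * Polynomial.aeval M p.divX + (p.coeff 0) • (1 : Matrix (Fin n) (Fin n) ℂ) = 0 := by
    have := congrArg (Polynomial.aeval M) hdecomp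
    simp only [map_add, map_mul, Polynomial.aeval_X, Polynomial.aeval_C, hCH] at this
    rw [← this, Algebra.algebraMap_eq_smul_one]
  have key : M * Polynomial.aeval M p.divX = -((p.coeff 0) • 1) := by
    rw [eq_neg_iff_add_eq_zero]; exact h2
  have done1 : M * ((-(p.coeff 0))⁻¹ • Polynomial.aeval M p.divX) = 1 := by
    rw [mul_smul_comm, key, smul_neg, ← neg_smul, smul_smul]
    have : -(-p.coeff 0)⁻¹ * p.coeff 0 = 1 := by field_simp
    rw [this, one_smul]
  refine ⟨(-(p.coeff 0))⁻¹ • Polynomial.aeval M p.divX, ?_, done1, ?_⟩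
  · apply Subalgebra.smul_mem
    rw [Algebra.adjoin_singleton_eq_range_aeval]
    exact ⟨p.divX, rfl⟩
  · have hcomm : Polynomial.aeval M p.divX * M = M * Polynomial.aeval M p.divX := by
      have := congrArg (Polynomial.aeval M) (mul_comm p.divX X)
      simpa only [map_mul, Polynomial.aeval_X] using this
    rw [smul_mul_assoc, hcomm, ← mul_smul_comm]
    exact done1

set_option maxHeartbeats 2000000 in
theorem stmt_3 {n : ℕ} (K : GL (Fin n) ℂ) (m : ℕ) (hm : 0 < m) :
    ∃ Khat : GL (Fin n) ℂ, Khat ^ m = K ∧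
      ∀ A : GL (Fin n) ℂ, A * K = K * A → A * Khat = Khat * A := by
  classical
  set k : Matrix (Fin n) (Fin n) ℂ := (K : Matrix (Fin n) (Fin n) ℂ) with hk
  set S : Subalgebra ℂ (Matrix (Fin n) (Fin n) ℂ) := Algebra.adjoin ℂ {k} with hS
  haveI : FiniteDimensional ℂ S :=
    FiniteDimensional.finiteDimensional_submodule (Subalgebra.toSubmodule S)
  haveI : CompleteSpace S := complete_of_proper
  letI : NormedAlgebra ℚ S := NormedAlgebra.restrictScalars ℚ ℂ S
  haveI : IsTopologicalRing S := NonUnitalSeminormedRing.toIsTopologicalRing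
  -- commutativity of S
  have Scomm : ∀ x y : S, x * y = y * x := by
    intro x y
    have hx : (x : Matrix (Fin n) (Fin n) ℂ) ∈ Algebra.adjoin ℂ {k} := x.2
    have hy : (y : Matrix (Fin n) (Fin n) ℂ) ∈ Algebra.adjoin ℂ {k} := y.2
    rw [Algebra.adjoin_singleton_eq_range_aeval] at hx hy
    obtain ⟨p, hp⟩ := hx
    obtain ⟨q, hq⟩ := hy
    apply Subtype.ext
    show (x : Matrix (Fin n) (Fin n) ℂ) * y = (y : Matrix (Fin n) (Fin n) ℂ) * x
    rw [← hp, ← hq, ← map_mul, ← map_mul, mul_comm]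
  -- units of the big algebra lying in S are units of S
  have unitS : ∀ x : S, IsUnit (x : Matrix (Fin n) (Fin n) ℂ) → IsUnit x := by
    intro x hx
    obtain ⟨N, hN, h1, h2⟩ := inv_mem_adjoin _ hx
    have hNS : N ∈ S := by
      have hle : Algebra.adjoin ℂ {(x : Matrix (Fin n) (Fin n) ℂ)} ≤ S :=
        Algebra.adjoin_le (by simpa using x.2)
      exact hle hN
    exact ⟨⟨x, ⟨N, hNS⟩, Subtype.ext h1, Subtype.ext h2⟩, rfl⟩
  set u : S := ⟨k, Algebra.self_mem_adjoin_singleton ℂ k⟩ with hu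
  set f : ℂ → S := fun t => 1 + t • (u - 1) with hf
  have hfval : ∀ t : ℂ, ((f t : S) : Matrix (Fin n) (Fin n) ℂ) = 1 + t • (k - 1) := by
    intro t; simp [hf, hu]
  -- the set of bad parameters is finite
  set Z : Set ℂ := {t | ¬ IsUnit ((1 : Matrix (Fin n) (Fin n) ℂ) + t • (k - 1))} with hZ
  have hZfin : Z.Finite := by
    set q : Polynomial ℂ :=
      (Matrix.det (1 + (Polynomial.X : Polynomial ℂ) • (k - 1).map Polynomial.C)).divX.divX with hq
    set P : Polynomial ℂ :=
      1 + Polynomial.C ((k - 1).trace) * Polynomial.X + q * Polynomial.X ^ 2 with hP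
    have hPeval : ∀ t : ℂ, P.eval t = ((1 : Matrix (Fin n) (Fin n) ℂ) + t • (k - 1)).det := by
      intro t
      rw [Matrix.det_one_add_smul, hP]
      simp only [Polynomial.eval_add, Polynomial.eval_one, Polynomial.eval_mul, Polynomial.eval_C,
        Polynomial.eval_X, Polynomial.eval_pow]
      rfl
    have hP0 : P.eval 0 = 1 := by rw [hPeval]; simp
    have hPne : P ≠ 0 := by intro h; rw [h] at hP0; simp at hP0
    apply (Polynomial.finite_setOf_isRoot hPne).subset
    intro t ht
    show P.IsRoot t
    by_contra h
    exact ht ((Matrix.isUnit_iff_isUnit_det _).2 (by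
      rw [← hPeval]; exact isUnit_iff_ne_zero.2 h))
  have h0Z : (0 : ℂ) ∉ Z := by simp [hZ]
  have h1Z : (1 : ℂ) ∉ Z := by
    simp only [hZ, Set.mem_setOf_eq, not_not, one_smul]
    rw [add_comm, sub_add_cancel]
    exact K.isUnit
  -- a path of units from 1 to u
  have hpc : IsPathConnected Zᶜ :=
    hZfin.countable.isPathConnected_compl_of_one_lt_rank
      (Complex.rank_real_complex ▸ Nat.one_lt_ofNat)
  have hjoin : JoinedIn Zᶜ (0 : ℂ) 1 := hpc.joinedIn 0 h0Z 1 h1Z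
  obtain ⟨γ, hγ⟩ := hjoin
  have hfcont : Continuous f := by
    apply continuous_const.add
    exact continuous_id.smul continuous_const
  set C : Set S := (f ∘ γ) '' Set.univ with hC
  have hCconn : IsPreconnected C :=
    (isPreconnected_univ.image _ ((hfcont.comp γ.continuous).continuousOn))
  have hCunit : ∀ x ∈ C, IsUnit x := by
    rintro x ⟨t, -, rfl⟩
    apply unitS
    rw [Function.comp_apply, hfval]
    have := hγ t
    simpa [hZ] using this
  have h1C : (1 : S) ∈ C := by
    refine ⟨0, trivial, ?_⟩
    simp [hf, γ.source]
  have huC : u ∈ C := by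
    refine ⟨1, trivial, ?_⟩
    simp only [Function.comp_apply, γ.target, hf, one_smul]
    rw [add_comm, sub_add_cancel]
  -- the range of exp
  set E : Set S := Set.range (NormedSpace.exp : S → S) with hE
  have hmul : ∀ a b : S, NormedSpace.exp a * NormedSpace.exp b = NormedSpace.exp (a + b) :=
    fun a b => (NormedSpace.exp_add_of_commute (Scomm a b)).symm
  have hnhds1 : E ∈ nhds (1 : S) := by
    have h1 : HasStrictFDerivAt (NormedSpace.exp : S → S)
        ((ContinuousLinearEquiv.refl ℂ S : S ≃L[ℂ] S) : S →L[ℂ] S) 0 :=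
      hasStrictFDerivAt_exp_zero
    have h2 := h1.map_nhds_eq_of_equiv
    rw [NormedSpace.exp_zero] at h2
    erw [← h2]
    exact Filter.mem_map.2 (Filter.univ_mem' fun a => Set.mem_range_self a)
  -- E is a neighborhood of each of its points
  have hEnhds : ∀ x ∈ E, E ∈ nhds x := by
    rintro x ⟨a, rfl⟩
    have hg : Continuous fun y : S => NormedSpace.exp (-a) * y :=
      continuous_const.mul continuous_id
    have hginv : NormedSpace.exp (-a) * NormedSpace.exp a = 1 := by
      rw [hmul, neg_add_cancel, NormedSpace.exp_zero]
    have hmem : (fun y : S => NormedSpace.exp (-a) * y) ⁻¹' E ∈ nhds (NormedSpace.exp a) := by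
      apply hg.continuousAt.preimage_mem_nhds
      show E ∈ nhds (NormedSpace.exp (-a) * NormedSpace.exp a)
      rw [hginv]
      exact hnhds1
    apply Filter.mem_of_superset hmem
    rintro y hy
    obtain ⟨b, hb⟩ := hy
    replace hb : NormedSpace.exp b = NormedSpace.exp (-a) * y := hb
    have h2 : NormedSpace.exp a * (NormedSpace.exp (-a) * y) = y := by
      rw [← mul_assoc, hmul, add_neg_cancel, NormedSpace.exp_zero, one_mul]
    have h3 : y = NormedSpace.exp (a + b) := by
      rw [← h2, ← hb, hmul]
    exact ⟨a + b, h3.symm⟩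
  have hEopen : IsOpen E := isOpen_iff_mem_nhds.2 hEnhds
  -- unit points outside E are not in the closure of E
  have hclosure : ∀ x : S, IsUnit x → x ∉ E → x ∉ closure E := by
    intro x hx hxE
    obtain ⟨xu, rfl⟩ := hx
    have hg : Continuous fun y : S => (↑xu⁻¹ : S) * y := continuous_const.mul continuous_id
    have hmem : (fun y : S => (↑xu⁻¹ : S) * y) ⁻¹' E ∈ nhds (xu : S) := by
      apply hg.continuousAt.preimage_mem_nhds
      have : (↑xu⁻¹ : S) * xu = 1 := xu.inv_mul
      rw [this]
      exact hnhds1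
    rw [mem_closure_iff_nhds]
    push_neg
    refine ⟨_, hmem, ?_⟩
    rw [Set.eq_empty_iff_forall_notMem]
    rintro y ⟨hy1, hy2⟩
    obtain ⟨c, hc⟩ := hy1
    obtain ⟨b, hb⟩ := hy2
    replace hc : NormedSpace.exp c = (↑xu⁻¹ : S) * y := hc
    apply hxE
    refine ⟨b + -c, ?_⟩
    rw [← hmul]
    have h1 : (xu : S) * ((↑xu⁻¹ : S) * y) = y := by
      rw [← mul_assoc, xu.mul_inv, one_mul]
    calc NormedSpace.exp b * NormedSpace.exp (-c)
        = y * NormedSpace.exp (-c) := by rw [hb]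
      _ = ((xu : S) * ((↑xu⁻¹ : S) * y)) * NormedSpace.exp (-c) := by rw [h1]
      _ = (xu : S) * (NormedSpace.exp c * NormedSpace.exp (-c)) := by
          rw [← hc, mul_assoc]
      _ = (xu : S) := by rw [hmul, add_neg_cancel, NormedSpace.exp_zero, mul_one]
  -- conclude u ∈ E by connectedness
  have hCE : C ⊆ E := by
    have hsub : C ⊆ E ∪ (closure E)ᶜ := by
      intro x hx
      by_cases h : x ∈ E
      · exact Or.inl h
      · exact Or.inr (hclosure x (hCunit x hx) h)
    have hdisj : Disjoint E (closure E)ᶜ :=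
      Set.disjoint_left.2 fun x hx hx' => hx' (subset_closure hx)
    exact hCconn.subset_left_of_subset_union hEopen isClosed_closure.isOpen_compl hdisj hsub
      ⟨1, h1C, ⟨0, NormedSpace.exp_zero⟩⟩
  obtain ⟨l, hl⟩ := hCE huC
  -- construct the m-th root
  set y : S := (m : ℂ)⁻¹ • l with hy
  set r : S := NormedSpace.exp y with hr
  have hrm : r ^ m = u := by
    erw [hr, ← NormedSpace.exp_nsmul, hy]
    have : m • ((m : ℂ)⁻¹ • l) = l := by
      rw [← Nat.cast_smul_eq_nsmul ℂ, smul_smul,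
        mul_inv_cancel₀ (Nat.cast_ne_zero.2 hm.ne'), one_smul]
    erw [this, hl]
  have hrunit : IsUnit r := NormedSpace.isUnit_exp y
  set Ru : Sˣ := hrunit.unit with hRu
  set Khat : GL (Fin n) ℂ := Units.map (S.val.toRingHom.toMonoidHom) Ru with hKhat
  have hRuval : (Ru : S) = r := hrunit.unit_spec
  have hKhatval : (Khat : Matrix (Fin n) (Fin n) ℂ) = ((r : S) : Matrix (Fin n) (Fin n) ℂ) := by
    rw [hKhat, Units.coe_map, hRuval]
    rfl
  refine ⟨Khat, ?_, ?_⟩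
  · apply Units.ext
    rw [Units.val_pow_eq_pow_val, hKhatval]
    have hpow : ((r ^ m : S) : Matrix (Fin n) (Fin n) ℂ)
        = ((r : S) : Matrix (Fin n) (Fin n) ℂ) ^ m := SubmonoidClass.coe_pow r m
    rw [← hpow, hrm]
  · intro A hA
    apply Units.ext
    show (A : Matrix (Fin n) (Fin n) ℂ) * Khat = (Khat : Matrix (Fin n) (Fin n) ℂ) * A
    rw [hKhatval]
    -- A commutes with everything in S
    have hAk : (A : Matrix (Fin n) (Fin n) ℂ) * k = k * (A : Matrix (Fin n) (Fin n) ℂ) := by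
      have h := congrArg (Units.val) hA
      rw [Units.val_mul, Units.val_mul] at h
      exact h
    have hScent : S ≤ Subalgebra.centralizer ℂ {(A : Matrix (Fin n) (Fin n) ℂ)} := by
      rw [hS]
      apply Algebra.adjoin_le
      intro x hx
      rw [Set.mem_singleton_iff] at hx
      subst hx
      rw [SetLike.mem_coe, Subalgebra.mem_centralizer_iff]
      intro g hg
      rw [Set.mem_singleton_iff] at hg
      subst hg
      exact hAk
    -- r as a matrix is exp of y.val
    have hrval : (r : Matrix (Fin n) (Fin n) ℂ) =
        NormedSpace.exp ((y : S) : Matrix (Fin n) (Fin n) ℂ) := by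
      rw [hr]
      exact NormedSpace.map_exp (S.val) continuous_subtype_val y
    rw [hrval]
    have hcy : Commute (A : Matrix (Fin n) (Fin n) ℂ) ((y : S) : Matrix (Fin n) (Fin n) ℂ) := by
      have := hScent y.2
      rw [Subalgebra.mem_centralizer_iff] at this
      exact this _ rfl
    exact (hcy.exp_right).eq
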